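/- The bracket operation [L_{(a₁,b₁)}, L_{(a₂,b₂)}] = (a₂-a₁)L_{(a₁+a₂, b₁+b₂+1)} + (b₂-b₁)L_{(a₁+a₂, b₁+b₂)} defines a Lie algebra structure on the free module with basis {L_{(a,b)} : a,b ∈ ℤ}; in particular the Jacobi identity holds. -/

import Mathlib

noncomputable def Lgen (a b : ℤ) : (ℤ × ℤ) →₀ ℂ := Finsupp.single (a, b) 1

noncomputable def wbr (x y : (ℤ × ℤ) →₀ ℂ) : (ℤ × ℤ) →₀ ℂ :=
  x.sum fun p c => y.sum fun q d =>
    (c * d) • (((q.1 - p.1 : ℤ) : ℂ) • Lgen (p.1 + q.1) (p.2 + q.2 + 1)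
      + ((q.2 - p.2 : ℤ) : ℂ) • Lgen (p.1 + q.1) (p.2 + q.2))

lemma wbr_add_left (x x' y : (ℤ × ℤ) →₀ ℂ) : wbr (x + x') y = wbr x y + wbr x' y := by
  unfold wbr
  rw [Finsupp.sum_add_index']
  · intro p; simp
  · intro p b1 b2
    simp only [add_mul, add_smul, Finsupp.sum_add]

lemma wbr_smul_left (c : ℂ) (x y : (ℤ × ℤ) →₀ ℂ) : wbr (c • x) y = c • wbr x y := by
  unfold wbr
  rw [Finsupp.sum_smul_index' (by intro p; simp), Finsupp.smul_sum]
  refine Finsupp.sum_congr fun p _ => ?_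
  rw [Finsupp.smul_sum]
  refine Finsupp.sum_congr fun q _ => ?_
  simp [smul_smul, mul_assoc]

lemma wbr_add_right (x y y' : (ℤ × ℤ) →₀ ℂ) : wbr x (y + y') = wbr x y + wbr x y' := by
  unfold wbr
  rw [← Finsupp.sum_add]
  refine Finsupp.sum_congr fun p _ => ?_
  rw [Finsupp.sum_add_index']
  · intro q; simp
  · intro q d1 d2; simp only [mul_add, add_smul]

lemma wbr_smul_right (c : ℂ) (x y : (ℤ × ℤ) →₀ ℂ) : wbr x (c • y) = c • wbr x y := by
  unfold wbr
  rw [Finsupp.smul_sum]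
  refine Finsupp.sum_congr fun p b => ?_
  rw [Finsupp.sum_smul_index' (by intro q; simp), Finsupp.smul_sum]
  refine Finsupp.sum_congr fun q d => ?_
  rw [smul_eq_mul, smul_smul]
  ring_nf

lemma wbr_single (p q : ℤ × ℤ) (c d : ℂ) :
    wbr (Finsupp.single p c) (Finsupp.single q d) =
      (c * d) • (((q.1 - p.1 : ℤ) : ℂ) • Lgen (p.1 + q.1) (p.2 + q.2 + 1)
        + ((q.2 - p.2 : ℤ) : ℂ) • Lgen (p.1 + q.1) (p.2 + q.2)) := by
  unfold wbr
  rw [Finsupp.sum_single_index (by simp), Finsupp.sum_single_index (by simp)]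

lemma wbr_Lgen (a b a' b' : ℤ) :
    wbr (Lgen a b) (Lgen a' b') =
      ((a' - a : ℤ) : ℂ) • Lgen (a + a') (b + b' + 1)
        + ((b' - b : ℤ) : ℂ) • Lgen (a + a') (b + b') := by
  rw [Lgen, Lgen, wbr_single]; simp

lemma wbr_zero_left (y : (ℤ × ℤ) →₀ ℂ) : wbr 0 y = 0 := by
  unfold wbr; simp

lemma wbr_zero_right (x : (ℤ × ℤ) →₀ ℂ) : wbr x 0 = 0 := by
  unfold wbr; simp

lemma single_eq_smul_Lgen (p : ℤ × ℤ) (c : ℂ) :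
    Finsupp.single p c = c • Lgen p.1 p.2 := by
  simp [Lgen, Finsupp.smul_single']

lemma wbr_swap_Lgen (a b a' b' : ℤ) :
    wbr (Lgen a b) (Lgen a' b') + wbr (Lgen a' b') (Lgen a b) = 0 := by
  simp only [wbr_Lgen]
  push_cast
  ring_nf
  module

lemma jacobi_Lgen (a1 b1 a2 b2 a3 b3 : ℤ) :
    wbr (Lgen a1 b1) (wbr (Lgen a2 b2) (Lgen a3 b3))
      + wbr (Lgen a2 b2) (wbr (Lgen a3 b3) (Lgen a1 b1))
      + wbr (Lgen a3 b3) (wbr (Lgen a1 b1) (Lgen a2 b2)) = 0 := by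
  simp only [wbr_Lgen, wbr_add_right, wbr_smul_right]
  push_cast
  ring_nf
  module

lemma wbr_swap (x y : (ℤ × ℤ) →₀ ℂ) : wbr x y + wbr y x = 0 := by
  induction x using Finsupp.induction with
  | zero => simp [wbr_zero_left, wbr_zero_right]
  | single_add p c f _ _ ih =>
    have hsingle : ∀ y : (ℤ × ℤ) →₀ ℂ,
        wbr (Finsupp.single p c) y + wbr y (Finsupp.single p c) = 0 := by
      intro y
      induction y using Finsupp.induction with
      | zero => simp [wbr_zero_left, wbr_zero_right]
      | single_add q d g _ _ ihg =>
        rw [wbr_add_right, wbr_add_left]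
        have : wbr (Finsupp.single p c) (Finsupp.single q d)
            + wbr (Finsupp.single q d) (Finsupp.single p c) = 0 := by
          rw [single_eq_smul_Lgen p c, single_eq_smul_Lgen q d]
          simp only [wbr_smul_left, wbr_smul_right, smul_smul, mul_comm d c,
            ← smul_add]
          rw [wbr_swap_Lgen]; simp
        calc wbr (Finsupp.single p c) (Finsupp.single q d) + wbr (Finsupp.single p c) g
              + (wbr (Finsupp.single q d) (Finsupp.single p c) + wbr g (Finsupp.single p c))
            = (wbr (Finsupp.single p c) (Finsupp.single q d)
                + wbr (Finsupp.single q d) (Finsupp.single p c))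
              + (wbr (Finsupp.single p c) g + wbr g (Finsupp.single p c)) := by abel
          _ = 0 := by rw [this, ihg]; simp
    rw [wbr_add_left, wbr_add_right]
    calc wbr (Finsupp.single p c) y + wbr f y + (wbr y (Finsupp.single p c) + wbr y f)
        = (wbr (Finsupp.single p c) y + wbr y (Finsupp.single p c)) + (wbr f y + wbr y f) := by abel
      _ = 0 := by rw [hsingle, ih]; simp

lemma wbr_self (x : (ℤ × ℤ) →₀ ℂ) : wbr x x = 0 := by
  have h := wbr_swap x x
  rw [← two_smul ℂ] at h
  simpa using h

lemma jacobi (x y z : (ℤ × ℤ) →₀ ℂ) :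
    wbr x (wbr y z) + wbr y (wbr z x) + wbr z (wbr x y) = 0 := by
  induction x using Finsupp.induction with
  | zero => simp [wbr_zero_left, wbr_zero_right]
  | single_add p c f _ _ ihx =>
    have hx : ∀ y z : (ℤ × ℤ) →₀ ℂ,
        wbr (Finsupp.single p c) (wbr y z) + wbr y (wbr z (Finsupp.single p c))
          + wbr z (wbr (Finsupp.single p c) y) = 0 := by
      intro y z
      induction y using Finsupp.induction generalizing z with
      | zero => simp [wbr_zero_left, wbr_zero_right]
      | single_add q d g _ _ ihy =>
        have hy : ∀ z : (ℤ × ℤ) →₀ ℂ,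
            wbr (Finsupp.single p c) (wbr (Finsupp.single q d) z)
              + wbr (Finsupp.single q d) (wbr z (Finsupp.single p c))
              + wbr z (wbr (Finsupp.single p c) (Finsupp.single q d)) = 0 := by
          intro z
          induction z using Finsupp.induction with
          | zero => simp [wbr_zero_left, wbr_zero_right]
          | single_add r e h _ _ ihz =>
            have base :
                wbr (Finsupp.single p c) (wbr (Finsupp.single q d) (Finsupp.single r e))
                  + wbr (Finsupp.single q d) (wbr (Finsupp.single r e) (Finsupp.single p c))
                  + wbr (Finsupp.single r e) (wbr (Finsupp.single p c) (Finsupp.single q d)) = 0 := by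
              rw [single_eq_smul_Lgen p c, single_eq_smul_Lgen q d, single_eq_smul_Lgen r e]
              simp only [wbr_smul_left, wbr_smul_right, smul_smul]
              rw [show e * d * c = c * d * e by ring, show c * e * d = c * d * e by ring,
                show d * c * e = c * d * e by ring, ← smul_add, ← smul_add]
              rw [jacobi_Lgen]; simp
            rw [wbr_add_right, wbr_add_left, wbr_add_right, wbr_add_right, wbr_add_left]
            calc _ = (wbr (Finsupp.single p c) (wbr (Finsupp.single q d) (Finsupp.single r e))
                  + wbr (Finsupp.single q d) (wbr (Finsupp.single r e) (Finsupp.single p c))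
                  + wbr (Finsupp.single r e) (wbr (Finsupp.single p c) (Finsupp.single q d)))
                + (wbr (Finsupp.single p c) (wbr (Finsupp.single q d) h)
                  + wbr (Finsupp.single q d) (wbr h (Finsupp.single p c))
                  + wbr h (wbr (Finsupp.single p c) (Finsupp.single q d))) := by abel
              _ = 0 := by rw [base, ihz]; simp
        rw [wbr_add_left, wbr_add_right, wbr_add_left, wbr_add_right, wbr_add_right]
        calc _ = (wbr (Finsupp.single p c) (wbr (Finsupp.single q d) z)
              + wbr (Finsupp.single q d) (wbr z (Finsupp.single p c))
              + wbr z (wbr (Finsupp.single p c) (Finsupp.single q d)))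
            + (wbr (Finsupp.single p c) (wbr g z) + wbr g (wbr z (Finsupp.single p c))
              + wbr z (wbr (Finsupp.single p c) g)) := by abel
          _ = 0 := by rw [hy, ihy]; simp
    rw [wbr_add_left, wbr_add_right, wbr_add_left, wbr_add_right, wbr_add_right]
    calc _ = (wbr (Finsupp.single p c) (wbr y z) + wbr y (wbr z (Finsupp.single p c))
          + wbr z (wbr (Finsupp.single p c) y))
        + (wbr f (wbr y z) + wbr y (wbr z f) + wbr z (wbr f y)) := by abel
      _ = 0 := by rw [hx, ihx]; simp

theorem stmt_1 :
    (∀ x x' y : (ℤ × ℤ) →₀ ℂ, wbr (x + x') y = wbr x y + wbr x' y) ∧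
    (∀ (c : ℂ) (x y : (ℤ × ℤ) →₀ ℂ), wbr (c • x) y = c • wbr x y) ∧
    (∀ x y y' : (ℤ × ℤ) →₀ ℂ, wbr x (y + y') = wbr x y + wbr x y') ∧
    (∀ (c : ℂ) (x y : (ℤ × ℤ) →₀ ℂ), wbr x (c • y) = c • wbr x y) ∧
    (∀ x : (ℤ × ℤ) →₀ ℂ, wbr x x = 0) ∧
    (∀ x y z : (ℤ × ℤ) →₀ ℂ,
      wbr x (wbr y z) + wbr y (wbr z x) + wbr z (wbr x y) = 0) :=
  ⟨wbr_add_left, wbr_smul_left, wbr_add_right, wbr_smul_right, wbr_self, jacobi⟩
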